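/- arXiv:1407.5502 — 2 statements merged into one kernel-verified Lean document; each statement's English description precedes it below -/
import Mathlib

section
/- There exists a constant M₀ > 0, depending only on θ₋ and θ₊ (in particular independent of α and δ₀), such that for every α > 0, every δ₀ ∈ (0,1) and every x ≥ 0 one has |Θ₀'(x)| ≤ M₀ α δ₀ and |Θ₀''(x)| ≤ M₀ α² δ₀. -/
lemma aux_d1 (θp c α δ₀ : ℝ) {y : ℝ} (hy : 0 < 1 + α * y) :
    HasDerivAt (fun y : ℝ => θp - c * Real.exp (1 - (1 + α * y) ^ δ₀))
      (c * (α * δ₀) * ((1 + α * y) ^ (δ₀ - 1) * Real.exp (1 - (1 + α * y) ^ δ₀))) y := by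
  have h1 : HasDerivAt (fun y : ℝ => 1 + α * y) α y := by
    simpa using ((hasDerivAt_id y).const_mul α).const_add 1
  have h2 : HasDerivAt (fun y : ℝ => (1 + α * y) ^ δ₀)
      (δ₀ * (1 + α * y) ^ (δ₀ - 1) * α) y :=
    by have := (Real.hasDerivAt_rpow_const (p := δ₀) (Or.inl hy.ne')).comp y h1; exact this
  have h3 := (h2.const_sub 1).exp
  have h4 := (h3.const_mul c).const_sub θp
  refine h4.congr_deriv ?_
  ring

lemma aux_d2 (c α δ₀ : ℝ) {y : ℝ} (hy : 0 < 1 + α * y) :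
    HasDerivAt (fun y : ℝ => c * (α * δ₀) * ((1 + α * y) ^ (δ₀ - 1) * Real.exp (1 - (1 + α * y) ^ δ₀)))
      (c * (α ^ 2 * δ₀) * Real.exp (1 - (1 + α * y) ^ δ₀) *
        ((δ₀ - 1) * (1 + α * y) ^ (δ₀ - 2) - δ₀ * (1 + α * y) ^ (2 * δ₀ - 2))) y := by
  have h1 : HasDerivAt (fun y : ℝ => 1 + α * y) α y := by
    simpa using ((hasDerivAt_id y).const_mul α).const_add 1
  have hP : HasDerivAt (fun y : ℝ => (1 + α * y) ^ (δ₀ - 1))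
      ((δ₀ - 1) * (1 + α * y) ^ (δ₀ - 1 - 1) * α) y :=
    by have := (Real.hasDerivAt_rpow_const (p := δ₀ - 1) (Or.inl hy.ne')).comp y h1; exact this
  have h2 : HasDerivAt (fun y : ℝ => (1 + α * y) ^ δ₀)
      (δ₀ * (1 + α * y) ^ (δ₀ - 1) * α) y :=
    by have := (Real.hasDerivAt_rpow_const (p := δ₀) (Or.inl hy.ne')).comp y h1; exact this
  have hE := (h2.const_sub 1).exp
  have h5 := (hP.mul hE).const_mul (c * (α * δ₀))
  refine h5.congr_deriv ?_
  have e1 : (1 + α * y) ^ (2 * δ₀ - 2) = (1 + α * y) ^ (δ₀ - 1) * (1 + α * y) ^ (δ₀ - 1) := by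
    rw [← Real.rpow_add hy]; ring_nf
  have e2 : (1 + α * y) ^ (δ₀ - 2) = (1 + α * y) ^ (δ₀ - 1 - 1) := by congr 1; ring
  rw [e1, e2]
  ring

set_option maxHeartbeats 1000000 in
/-- For `Θ₀(x) = θ₊ − (θ₊ − θ₋) exp(1 − (1 + αx)^{δ₀})`, there is a constant
`M₀ > 0` depending only on `θ₋, θ₊` (independent of `α` and `δ₀`) such that for all `α > 0`,
`δ₀ ∈ (0,1)` and `x ≥ 0`, `|Θ₀'(x)| ≤ M₀ α δ₀` and `|Θ₀''(x)| ≤ M₀ α² δ₀`. -/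
theorem stmt_0 (θm θp : ℝ) (hθm : 0 < θm) (hθp : 0 < θp) :
    ∃ M₀ > (0:ℝ), ∀ α > (0:ℝ), ∀ δ₀ ∈ Set.Ioo (0:ℝ) 1, ∀ x ≥ (0:ℝ),
      |deriv (fun y : ℝ => θp - (θp - θm) * Real.exp (1 - (1 + α * y) ^ δ₀)) x|
          ≤ M₀ * α * δ₀ ∧
      |deriv (deriv (fun y : ℝ => θp - (θp - θm) * Real.exp (1 - (1 + α * y) ^ δ₀))) x|
          ≤ M₀ * α ^ 2 * δ₀ := by
  set c : ℝ := θp - θm with hc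
  refine ⟨2 * |c| + 2, by positivity, ?_⟩
  rintro α hα δ₀ ⟨hδ0, hδ1⟩ x hx
  have hy : 0 < 1 + α * x := by nlinarith
  have ht : (1:ℝ) ≤ 1 + α * x := by nlinarith
  -- abbreviations
  set t : ℝ := 1 + α * x with hts
  have hP1 : t ^ (δ₀ - 1) ≤ 1 := Real.rpow_le_one_of_one_le_of_nonpos ht (by linarith)
  have hP2 : t ^ (δ₀ - 2) ≤ 1 := Real.rpow_le_one_of_one_le_of_nonpos ht (by linarith)
  have hP3 : t ^ (2 * δ₀ - 2) ≤ 1 := Real.rpow_le_one_of_one_le_of_nonpos ht (by linarith)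
  have hP1n : 0 ≤ t ^ (δ₀ - 1) := Real.rpow_nonneg (by linarith) _
  have hP2n : 0 ≤ t ^ (δ₀ - 2) := Real.rpow_nonneg (by linarith) _
  have hP3n : 0 ≤ t ^ (2 * δ₀ - 2) := Real.rpow_nonneg (by linarith) _
  have htδ : (1:ℝ) ≤ t ^ δ₀ := Real.one_le_rpow ht hδ0.le
  have hE : Real.exp (1 - t ^ δ₀) ≤ 1 := Real.exp_le_one_iff.mpr (by linarith)
  have hEn : 0 < Real.exp (1 - t ^ δ₀) := Real.exp_pos _
  have hd1 : deriv (fun y : ℝ => θp - c * Real.exp (1 - (1 + α * y) ^ δ₀)) x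
      = c * (α * δ₀) * (t ^ (δ₀ - 1) * Real.exp (1 - t ^ δ₀)) := (aux_d1 θp c α δ₀ hy).deriv
  have hev : deriv (fun y : ℝ => θp - c * Real.exp (1 - (1 + α * y) ^ δ₀))
      =ᶠ[nhds x] fun y : ℝ =>
        c * (α * δ₀) * ((1 + α * y) ^ (δ₀ - 1) * Real.exp (1 - (1 + α * y) ^ δ₀)) := by
    have hopen : IsOpen {y : ℝ | 0 < 1 + α * y} :=
      isOpen_lt continuous_const (by continuity)
    filter_upwards [hopen.mem_nhds hy] with y hy'
    exact (aux_d1 θp c α δ₀ hy').deriv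
  have hd2 : deriv (deriv (fun y : ℝ => θp - c * Real.exp (1 - (1 + α * y) ^ δ₀))) x
      = c * (α ^ 2 * δ₀) * Real.exp (1 - t ^ δ₀) *
        ((δ₀ - 1) * t ^ (δ₀ - 2) - δ₀ * t ^ (2 * δ₀ - 2)) := by
    rw [hev.deriv_eq]
    exact (aux_d2 c α δ₀ hy).deriv
  constructor
  · rw [hd1, abs_mul, abs_mul, abs_of_pos (mul_pos hα hδ0),
      abs_of_nonneg (mul_nonneg hP1n hEn.le)]
    have h1 : t ^ (δ₀ - 1) * Real.exp (1 - t ^ δ₀) ≤ 1 :=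
      mul_le_one₀ hP1 hEn.le hE
    have key : |c| * (α * δ₀) * (t ^ (δ₀ - 1) * Real.exp (1 - t ^ δ₀))
        ≤ |c| * (α * δ₀) * 1 := mul_le_mul_of_nonneg_left h1 (by positivity)
    have h2 : |c| * (α * δ₀) * 1 ≤ (2 * |c| + 2) * α * δ₀ := by
      nlinarith [abs_nonneg c, mul_pos hα hδ0]
    linarith
  · rw [hd2, abs_mul, abs_mul, abs_mul,
      abs_of_pos (mul_pos (pow_pos hα 2) hδ0), abs_of_pos hEn]
    have h2 : |(δ₀ - 1) * t ^ (δ₀ - 2) - δ₀ * t ^ (2 * δ₀ - 2)| ≤ 2 := by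
      rw [abs_le]
      constructor <;> nlinarith
    have hEp : Real.exp (1 - t ^ δ₀) * |(δ₀ - 1) * t ^ (δ₀ - 2) - δ₀ * t ^ (2 * δ₀ - 2)| ≤ 2 := by
      nlinarith [abs_nonneg ((δ₀ - 1) * t ^ (δ₀ - 2) - δ₀ * t ^ (2 * δ₀ - 2))]
    have key : |c| * (α ^ 2 * δ₀) *
        (Real.exp (1 - t ^ δ₀) * |(δ₀ - 1) * t ^ (δ₀ - 2) - δ₀ * t ^ (2 * δ₀ - 2)|)
        ≤ |c| * (α ^ 2 * δ₀) * 2 :=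
      mul_le_mul_of_nonneg_left hEp (by positivity)
    have h3 : |c| * (α ^ 2 * δ₀) * 2 ≤ (2 * |c| + 2) * α ^ 2 * δ₀ := by
      nlinarith [abs_nonneg c, mul_pos (pow_pos hα 2) hδ0]
    calc |c| * (α ^ 2 * δ₀) * Real.exp (1 - t ^ δ₀) *
          |(δ₀ - 1) * t ^ (δ₀ - 2) - δ₀ * t ^ (2 * δ₀ - 2)|
        = |c| * (α ^ 2 * δ₀) * (Real.exp (1 - t ^ δ₀) *
          |(δ₀ - 1) * t ^ (δ₀ - 2) - δ₀ * t ^ (2 * δ₀ - 2)|) := by ring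
      _ ≤ |c| * (α ^ 2 * δ₀) * 2 := key
      _ ≤ (2 * |c| + 2) * α ^ 2 * δ₀ := h3
end

section
/- There exists a constant M₀ > 0, depending only on θ₋ and θ₊ (in particular independent of α and δ₀), such that for every α > 0 and δ₀ ∈ (0,1): ∫₀^∞ Θ₀'(x)² dx ≤ M₀ α δ₀, ∫₀^∞ |Θ₀'(x)| dx = |θ₊ − θ₋| ≤ M₀, and ∫₀^∞ Θ₀'(x)² (1 + αx) dx ≤ M₀ α δ₀. -/
open MeasureTheory Real

-- derivative of inner exp piece
lemma aux_hasDerivAt_exp (α δ₀ x : ℝ) (hx : (0:ℝ) < 1 + α * x) :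
    HasDerivAt (fun y : ℝ => Real.exp (1 - (1 + α * y) ^ δ₀))
      (-(δ₀ * (1 + α * x) ^ (δ₀ - 1) * α) * Real.exp (1 - (1 + α * x) ^ δ₀)) x := by
  have h1 : HasDerivAt (fun y : ℝ => 1 + α * y) α x := by
    simpa using ((hasDerivAt_id x).const_mul α).const_add 1
  have h2 : HasDerivAt (fun y : ℝ => (1 + α * y) ^ δ₀)
      (δ₀ * (1 + α * x) ^ (δ₀ - 1) * α) x :=
    HasDerivAt.comp x (Real.hasDerivAt_rpow_const (p := δ₀) (Or.inl hx.ne')) h1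
  have h3 : HasDerivAt (fun y : ℝ => 1 - (1 + α * y) ^ δ₀)
      (-(δ₀ * (1 + α * x) ^ (δ₀ - 1) * α)) x := h2.const_sub 1
  simpa [mul_comm] using h3.exp

lemma aux_hasDerivAt (θm θp α δ₀ x : ℝ) (hx : (0:ℝ) < 1 + α * x) :
    HasDerivAt (fun y : ℝ => θp - (θp - θm) * Real.exp (1 - (1 + α * y) ^ δ₀))
      ((θp - θm) * (δ₀ * (1 + α * x) ^ (δ₀ - 1) * α) * Real.exp (1 - (1 + α * x) ^ δ₀)) x := by
  have h := ((aux_hasDerivAt_exp α δ₀ x hx).const_mul (θp - θm)).const_sub θp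
  exact h.congr_deriv (by ring)

/-- integral bounds on `Θ₀' ` for
`Θ₀(x) = θ₊ − (θ₊ − θ₋) exp(1 − (1 + αx)^{δ₀})`, with a constant `M₀` depending only on
`θ₋, θ₊` (independent of `α` and `δ₀`). -/
theorem stmt_1 (θm θp : ℝ) (hθm : 0 < θm) (hθp : 0 < θp) :
    ∃ M₀ > (0:ℝ), ∀ α > (0:ℝ), ∀ δ₀ ∈ Set.Ioo (0:ℝ) 1,
      (∫ x in Set.Ioi (0:ℝ),
          (deriv (fun y : ℝ => θp - (θp - θm) * Real.exp (1 - (1 + α * y) ^ δ₀)) x) ^ 2)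
        ≤ M₀ * α * δ₀ ∧
      (∫ x in Set.Ioi (0:ℝ),
          |deriv (fun y : ℝ => θp - (θp - θm) * Real.exp (1 - (1 + α * y) ^ δ₀)) x|)
        = |θp - θm| ∧
      |θp - θm| ≤ M₀ ∧
      (∫ x in Set.Ioi (0:ℝ),
          (deriv (fun y : ℝ => θp - (θp - θm) * Real.exp (1 - (1 + α * y) ^ δ₀)) x) ^ 2
            * (1 + α * x))
        ≤ M₀ * α * δ₀ := by
  set c : ℝ := θp - θm with hc
  refine ⟨(|c| + 1) ^ 2, by positivity, ?_⟩
  intro α hα δ₀ hδ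
  obtain ⟨hδ0, hδ1⟩ := hδ
  set f : ℝ → ℝ := fun y : ℝ => θp - (θp - θm) * Real.exp (1 - (1 + α * y) ^ δ₀) with hf
  set D : ℝ → ℝ := fun x => c * (δ₀ * (1 + α * x) ^ (δ₀ - 1) * α) *
      Real.exp (1 - (1 + α * x) ^ δ₀) with hD
  have hpos : ∀ x ∈ Set.Ioi (0:ℝ), (0:ℝ) < 1 + α * x := fun x hx => by
    have : 0 < x := hx
    nlinarith
  have hderiv : ∀ x ∈ Set.Ioi (0:ℝ), deriv f x = D x := fun x hx =>
    (aux_hasDerivAt θm θp α δ₀ x (hpos x hx)).deriv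
  -- absolute value formula on Ioi 0
  have habs : ∀ x ∈ Set.Ioi (0:ℝ), |D x| = |c| * (δ₀ * (1 + α * x) ^ (δ₀ - 1) * α) *
      Real.exp (1 - (1 + α * x) ^ δ₀) := by
    intro x hx
    have h1 : (0:ℝ) < (1 + α * x) ^ (δ₀ - 1) := Real.rpow_pos_of_pos (hpos x hx) _
    have h2 : (0:ℝ) < Real.exp (1 - (1 + α * x) ^ δ₀) := Real.exp_pos _
    have h3 : (0:ℝ) < δ₀ * (1 + α * x) ^ (δ₀ - 1) * α := by positivity
    rw [hD, abs_mul, abs_mul, abs_of_pos h3, abs_of_pos h2]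
  -- antiderivative for |D|
  set G : ℝ → ℝ := fun x => -|c| * Real.exp (1 - (1 + α * x) ^ δ₀) with hG
  have hGderiv : ∀ x ∈ Set.Ioi (0:ℝ), HasDerivAt G (|D x|) x := by
    intro x hx
    have h := (aux_hasDerivAt_exp α δ₀ x (hpos x hx)).const_mul (-|c|)
    rw [habs x hx]
    exact h.congr_deriv (by ring)
  have hGcont : ContinuousOn G (Set.Ici (0:ℝ)) := by
    apply Continuous.continuousOn
    have : Continuous fun x : ℝ => (1 + α * x) ^ δ₀ :=
      (continuous_const.add (continuous_const.mul continuous_id)).rpow_const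
        (fun x => Or.inr hδ0.le)
    exact continuous_const.mul ((continuous_const.sub this).rexp)
  have hGtend : Filter.Tendsto G Filter.atTop (nhds 0) := by
    have h1 : Filter.Tendsto (fun x : ℝ => 1 + α * x) Filter.atTop Filter.atTop := by
      apply Filter.tendsto_atTop_add_const_left
      exact (Filter.tendsto_const_mul_atTop_of_pos hα).mpr Filter.tendsto_id
    have h2 : Filter.Tendsto (fun x : ℝ => (1 + α * x) ^ δ₀) Filter.atTop Filter.atTop :=
      (tendsto_rpow_atTop hδ0).comp h1
    have h3 : Filter.Tendsto (fun x : ℝ => 1 - (1 + α * x) ^ δ₀) Filter.atTop Filter.atBot := by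
      have hn : Filter.Tendsto (fun x : ℝ => -((1 + α * x) ^ δ₀)) Filter.atTop Filter.atBot :=
        Filter.tendsto_neg_atTop_atBot.comp h2
      have := Filter.tendsto_atBot_add_const_left Filter.atTop 1 hn
      simpa [sub_eq_add_neg] using this
    have h4 : Filter.Tendsto (fun x : ℝ => Real.exp (1 - (1 + α * x) ^ δ₀))
        Filter.atTop (nhds 0) := Real.tendsto_exp_atBot.comp h3
    have := h4.const_mul (-|c|)
    simpa [hG, neg_mul] using this
  have hDnonneg : ∀ x ∈ Set.Ioi (0:ℝ), 0 ≤ |D x| := fun x _ => abs_nonneg _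
  have hInt : IntegrableOn (fun x => |D x|) (Set.Ioi (0:ℝ)) :=
    integrableOn_Ioi_deriv_of_nonneg (hGcont.continuousWithinAt Set.self_mem_Ici) hGderiv hDnonneg hGtend
  have hG0 : G 0 = -|c| := by simp [hG]
  have hIntEq : (∫ x in Set.Ioi (0:ℝ), |D x|) = |c| := by
    rw [integral_Ioi_of_hasDerivAt_of_nonneg (hGcont.continuousWithinAt Set.self_mem_Ici) hGderiv hDnonneg hGtend, hG0]
    ring
  -- key pointwise bound
  set K : ℝ := |c| * α * δ₀ with hK
  have hKnonneg : 0 ≤ K := by positivity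
  have hbound : ∀ x ∈ Set.Ioi (0:ℝ), |D x| ≤ K := by
    intro x hx
    have hbase : (1:ℝ) ≤ 1 + α * x := by
      have : (0:ℝ) < x := hx
      nlinarith
    have hA : (1 + α * x) ^ (δ₀ - 1) ≤ 1 :=
      Real.rpow_le_one_of_one_le_of_nonpos hbase (by linarith)
    have hu : (1:ℝ) ≤ (1 + α * x) ^ δ₀ := Real.one_le_rpow hbase hδ0.le
    have hB : Real.exp (1 - (1 + α * x) ^ δ₀) ≤ 1 :=
      Real.exp_le_one_iff.mpr (by linarith)
    have hApos : (0:ℝ) < (1 + α * x) ^ (δ₀ - 1) := Real.rpow_pos_of_pos (hpos x hx) _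
    have hBpos : (0:ℝ) < Real.exp (1 - (1 + α * x) ^ δ₀) := Real.exp_pos _
    rw [habs x hx, hK]
    calc |c| * (δ₀ * (1 + α * x) ^ (δ₀ - 1) * α) * Real.exp (1 - (1 + α * x) ^ δ₀)
        = |c| * α * δ₀ * ((1 + α * x) ^ (δ₀ - 1) * Real.exp (1 - (1 + α * x) ^ δ₀)) := by ring
      _ ≤ |c| * α * δ₀ * 1 := by
          apply mul_le_mul_of_nonneg_left _ (by positivity)
          nlinarith
      _ = |c| * α * δ₀ := mul_one _
  have hbound2 : ∀ x ∈ Set.Ioi (0:ℝ), |D x| * (1 + α * x) ≤ K := by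
    intro x hx
    have hbase : (1:ℝ) ≤ 1 + α * x := by
      have : (0:ℝ) < x := hx
      nlinarith
    have hA : (1 + α * x) ^ (δ₀ - 1) * (1 + α * x) = (1 + α * x) ^ δ₀ := by
      rw [← Real.rpow_add_one (by positivity : (1:ℝ) + α * x ≠ 0)]
      norm_num
    set u : ℝ := (1 + α * x) ^ δ₀ with hu
    have huge : (1:ℝ) ≤ u := Real.one_le_rpow hbase hδ0.le
    have hue : u * Real.exp (1 - u) ≤ 1 := by
      have h1 : u ≤ Real.exp (u - 1) := by
        have := Real.add_one_le_exp (u - 1)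
        linarith
      have h2 : Real.exp (1 - u) = (Real.exp (u - 1))⁻¹ := by
        rw [← Real.exp_neg]; ring_nf
      rw [h2]
      rw [mul_inv_le_iff₀ (Real.exp_pos _)]
      simpa using h1
    rw [habs x hx, hK]
    have hexp : (0:ℝ) ≤ Real.exp (1 - u) := (Real.exp_pos _).le
    calc |c| * (δ₀ * (1 + α * x) ^ (δ₀ - 1) * α) * Real.exp (1 - u) * (1 + α * x)
        = |c| * α * δ₀ * ((1 + α * x) ^ (δ₀ - 1) * (1 + α * x) * Real.exp (1 - u)) := by ring
      _ = |c| * α * δ₀ * (u * Real.exp (1 - u)) := by rw [hA]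
      _ ≤ |c| * α * δ₀ * 1 := by
          apply mul_le_mul_of_nonneg_left hue (by positivity)
      _ = |c| * α * δ₀ := by ring
  -- generic integral bound
  have hgen : ∀ h : ℝ → ℝ, (∀ x ∈ Set.Ioi (0:ℝ), 0 ≤ h x) →
      (∀ x ∈ Set.Ioi (0:ℝ), h x ≤ K * |D x|) →
      (∫ x in Set.Ioi (0:ℝ), h x) ≤ (|c| + 1) ^ 2 * α * δ₀ := by
    intro h hh0 hhK
    have hKint : Integrable (fun x => K * |D x|) (volume.restrict (Set.Ioi (0:ℝ))) :=
      hInt.const_mul K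
    have step : (∫ x in Set.Ioi (0:ℝ), h x) ≤ ∫ x in Set.Ioi (0:ℝ), K * |D x| := by
      apply integral_mono_of_nonneg
      · filter_upwards [ae_restrict_mem measurableSet_Ioi] with x hx using hh0 x hx
      · exact hKint
      · filter_upwards [ae_restrict_mem measurableSet_Ioi] with x hx using hhK x hx
    calc (∫ x in Set.Ioi (0:ℝ), h x) ≤ ∫ x in Set.Ioi (0:ℝ), K * |D x| := step
      _ = K * ∫ x in Set.Ioi (0:ℝ), |D x| := integral_const_mul K _
      _ = K * |c| := by rw [hIntEq]
      _ = |c| * |c| * α * δ₀ := by rw [hK]; ring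
      _ ≤ (|c| + 1) ^ 2 * α * δ₀ := by nlinarith [abs_nonneg c]
  constructor
  · -- first bound
    have := hgen (fun x => (D x) ^ 2) (fun x _ => sq_nonneg _) (fun x hx => by
      have h1 := hbound x hx
      show D x ^ 2 ≤ K * |D x|
      rw [← sq_abs (D x), sq]
      exact mul_le_mul_of_nonneg_right h1 (abs_nonneg _))
    calc (∫ x in Set.Ioi (0:ℝ), (deriv f x) ^ 2)
        = ∫ x in Set.Ioi (0:ℝ), (D x) ^ 2 := by
          apply setIntegral_congr_fun measurableSet_Ioi
          intro x hx
          simp only [hderiv x hx]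
      _ ≤ (|c| + 1) ^ 2 * α * δ₀ := this
  refine ⟨?_, ?_, ?_⟩
  · calc (∫ x in Set.Ioi (0:ℝ), |deriv f x|)
        = ∫ x in Set.Ioi (0:ℝ), |D x| := by
          apply setIntegral_congr_fun measurableSet_Ioi
          intro x hx
          simp only [hderiv x hx]
      _ = |c| := hIntEq
  · nlinarith [abs_nonneg c]
  · have := hgen (fun x => (D x) ^ 2 * (1 + α * x)) (fun x hx => by
      have := hpos x hx
      show (0:ℝ) ≤ D x ^ 2 * (1 + α * x)
      positivity) (fun x hx => by
      have h1 := hbound2 x hx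
      show D x ^ 2 * (1 + α * x) ≤ K * |D x|
      have h2 : D x ^ 2 * (1 + α * x) = (|D x| * (1 + α * x)) * |D x| := by
        rw [← sq_abs (D x), sq]; ring
      rw [h2]
      exact mul_le_mul_of_nonneg_right h1 (abs_nonneg _))
    calc (∫ x in Set.Ioi (0:ℝ), (deriv f x) ^ 2 * (1 + α * x))
        = ∫ x in Set.Ioi (0:ℝ), (D x) ^ 2 * (1 + α * x) := by
          apply setIntegral_congr_fun measurableSet_Ioi
          intro x hx
          simp only [hderiv x hx]
      _ ≤ (|c| + 1) ^ 2 * α * δ₀ := this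
end
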